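/- Let n, k, t, r be integers with 1 ≤ t, k ≥ 2t+1, n ≥ 2k+2 and 1 ≤ r ≤ C(n-2t-2, k-t-1). Define A₁ = {F ⊆ [n] : |F| = k, [t+1] ⊆ F} and A₂ = {F ⊆ [n] : |F| = k, {t+2,…,2t+2} ⊆ F, F ∩ [t+1] = ∅}. Then for every B ⊆ A₂ with |B| = r, the family F = A₁ ∪ B has size C(n-t-1, k-t-1) + r and satisfies ρ(F) = r·C(k,t)·C(n-k-t-1, k-2t-1). In particular, ρ_{n,k,t}(C(n-t-1,k-t-1)+r) ≤ r·C(k,t)·C(n-k-t-1, k-2t-1). -/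

import Mathlib

/-- The number of unordered pairs of distinct sets `F₁, F₂ ∈ F` with `|F₁ ∩ F₂| = t`. -/
def rhoPairs (t : ℕ) (F : Finset (Finset ℕ)) : ℕ :=
  ((F.powersetCard 2).filter
    (fun P => ∃ A ∈ P, ∃ B ∈ P, A ≠ B ∧ (A ∩ B).card = t)).card

/-- `ρ_{n,k,t}(ℓ)`: the minimum of `ρ(F)` over families `F` of `k`-element subsets
of `[n]` with `|F| = ℓ`. -/
noncomputable def rhoMin (n k t ℓ : ℕ) : ℕ :=
  sInf { m : ℕ | ∃ F : Finset (Finset ℕ),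
    F ⊆ (Finset.Icc 1 n).powersetCard k ∧ F.card = ℓ ∧ rhoPairs t F = m }

/-- The star `A₁ = {F ∈ C([n],k) : [t+1] ⊆ F}`. -/
def famA1 (n k t : ℕ) : Finset (Finset ℕ) :=
  ((Finset.Icc 1 n).powersetCard k).filter (fun F => Finset.Icc 1 (t + 1) ⊆ F)

/-- The star `A₂ = {F ∈ C([n],k) : [t+2,2t+2] ⊆ F, F ∩ [t+1] = ∅}`. -/
def famA2 (n k t : ℕ) : Finset (Finset ℕ) :=
  ((Finset.Icc 1 n).powersetCard k).filter
    (fun F => Finset.Icc (t + 2) (2 * t + 2) ⊆ F ∧ Disjoint F (Finset.Icc 1 (t + 1)))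

lemma card_supersets (U C : Finset ℕ) (hCU : C ⊆ U) {k : ℕ} (hk : C.card ≤ k) :
    ((U.powersetCard k).filter (fun F => C ⊆ F)).card
      = (U.card - C.card).choose (k - C.card) := by
  have key : ((U.powersetCard k).filter (fun F => C ⊆ F)).card
      = ((U \ C).powersetCard (k - C.card)).card := by
    apply Finset.card_nbij' (fun F => F \ C) (fun S => S ∪ C)
    · intro F hF
      simp only [Finset.mem_coe, Finset.mem_filter, Finset.mem_powersetCard] at hF ⊢
      obtain ⟨⟨hFU, hFk⟩, hCF⟩ := hF
      exact ⟨Finset.sdiff_subset_sdiff hFU le_rfl,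
        by rw [Finset.card_sdiff_of_subset hCF, hFk]⟩
    · intro S hS
      simp only [Finset.mem_coe, Finset.mem_filter, Finset.mem_powersetCard] at hS ⊢
      obtain ⟨hSU, hSc⟩ := hS
      have hdisj : Disjoint S C := Finset.disjoint_of_subset_left hSU Finset.sdiff_disjoint
      refine ⟨⟨Finset.union_subset (hSU.trans (Finset.sdiff_subset)) hCU, ?_⟩,
        Finset.subset_union_right⟩
      rw [Finset.card_union_of_disjoint hdisj, hSc, Nat.sub_add_cancel hk]
    · intro F hF
      simp only [Finset.mem_coe, Finset.mem_filter, Finset.mem_powersetCard] at hF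
      exact Finset.sdiff_union_of_subset hF.2
    · intro S hS
      simp only [Finset.mem_coe, Finset.mem_powersetCard] at hS
      have hdisj : Disjoint S C := Finset.disjoint_of_subset_left hS.1 Finset.sdiff_disjoint
      exact Finset.union_sdiff_cancel_right hdisj
  rw [key, Finset.card_powersetCard, Finset.card_sdiff_of_subset hCU]


lemma mem_famA1 {n k t : ℕ} {F : Finset ℕ} :
    F ∈ famA1 n k t ↔ F ⊆ Finset.Icc 1 n ∧ F.card = k ∧ Finset.Icc 1 (t + 1) ⊆ F := by
  simp [famA1, Finset.mem_powersetCard, and_assoc]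

lemma mem_famA2 {n k t : ℕ} {F : Finset ℕ} :
    F ∈ famA2 n k t ↔ F ⊆ Finset.Icc 1 n ∧ F.card = k ∧
      Finset.Icc (t + 2) (2 * t + 2) ⊆ F ∧ Disjoint F (Finset.Icc 1 (t + 1)) := by
  simp [famA2, Finset.mem_powersetCard, and_assoc]

lemma famA1_disj_famA2 (n k t : ℕ) : Disjoint (famA1 n k t) (famA2 n k t) := by
  rw [Finset.disjoint_left]
  intro a h1 h2
  rw [mem_famA1] at h1
  rw [mem_famA2] at h2
  have h1' : (1 : ℕ) ∈ a := h1.2.2 (by simp)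
  exact (Finset.disjoint_left.mp h2.2.2.2 h1') (by simp)

lemma famA2_eq (n k t : ℕ) :
    famA2 n k t = ((Finset.Icc (t + 2) n).powersetCard k).filter
      (fun F => Finset.Icc (t + 2) (2 * t + 2) ⊆ F) := by
  ext F
  rw [mem_famA2, Finset.mem_filter, Finset.mem_powersetCard]
  constructor
  · rintro ⟨hU, hc, hcore, hdisj⟩
    refine ⟨⟨fun x hx => ?_, hc⟩, hcore⟩
    have h1 := Finset.mem_Icc.mp (hU hx)
    have h2 : x ∉ Finset.Icc 1 (t + 1) := Finset.disjoint_left.mp hdisj hx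
    rw [Finset.mem_Icc] at h2 ⊢
    omega
  · rintro ⟨⟨hU, hc⟩, hcore⟩
    refine ⟨fun x hx => ?_, hc, hcore, Finset.disjoint_left.mpr fun x hx hx' => ?_⟩
    · have h1 := Finset.mem_Icc.mp (hU hx)
      rw [Finset.mem_Icc]; omega
    · have h1 := Finset.mem_Icc.mp (hU hx)
      have h2 := Finset.mem_Icc.mp hx'
      omega

lemma card_famA1 (n k t : ℕ) (hk : t + 1 ≤ k) (hn : t + 1 ≤ n) :
    (famA1 n k t).card = (n - t - 1).choose (k - t - 1) := by
  have h := card_supersets (Finset.Icc 1 n) (Finset.Icc 1 (t + 1))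
    (Finset.Icc_subset_Icc le_rfl hn) (k := k) (by simp [Nat.card_Icc]; omega)
  rw [famA1, h, Nat.card_Icc, Nat.card_Icc]
  congr 1 <;> omega

lemma card_famA2 (n k t : ℕ) (hk : t + 1 ≤ k) (hn : 2 * t + 2 ≤ n) :
    (famA2 n k t).card = (n - 2 * t - 2).choose (k - t - 1) := by
  have h := card_supersets (Finset.Icc (t + 2) n) (Finset.Icc (t + 2) (2 * t + 2))
    (Finset.Icc_subset_Icc le_rfl (by omega)) (k := k) (by simp [Nat.card_Icc]; omega)
  rw [famA2_eq, h, Nat.card_Icc, Nat.card_Icc]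
  congr 1 <;> omega

lemma count_cross (n k t : ℕ) (hk : 2 * t + 1 ≤ k) (hn : 2 * k + 2 ≤ n) {b : Finset ℕ}
    (hb : b ∈ famA2 n k t) :
    ((famA1 n k t).filter (fun a => (a ∩ b).card = t)).card
      = k.choose t * (n - k - t - 1).choose (k - 2 * t - 1) := by
  set U := Finset.Icc 1 n with hU
  set C := Finset.Icc 1 (t + 1) with hC
  rw [mem_famA2] at hb
  obtain ⟨hbU, hbk, -, hbC⟩ := hb
  have hCcard : C.card = t + 1 := by rw [hC, Nat.card_Icc]; omega
  have hCU : C ⊆ U := Finset.Icc_subset_Icc le_rfl (by omega)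
  have hCbdisj : Disjoint C b := hbC.symm
  have hCb_sub_U : C ∪ b ⊆ U := Finset.union_subset hCU hbU
  have hWcard : (U \ (C ∪ b)).card = n - k - t - 1 := by
    rw [Finset.card_sdiff_of_subset hCb_sub_U, Finset.card_union_of_disjoint hCbdisj, hCcard, hbk,
      hU, Nat.card_Icc]
    omega
  have key : ((famA1 n k t).filter (fun a => (a ∩ b).card = t)).card
      = ((b.powersetCard t) ×ˢ ((U \ (C ∪ b)).powersetCard (k - 2 * t - 1))).card := by
    apply Finset.card_nbij' (fun a => (a ∩ b, a \ (C ∪ b)))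
      (fun p => C ∪ p.1 ∪ p.2)
    · intro a ha
      rw [Finset.mem_coe, Finset.mem_filter, mem_famA1] at ha
      obtain ⟨⟨haU, hak, hCa⟩, hab⟩ := ha
      rw [Finset.mem_coe, Finset.mem_product, Finset.mem_powersetCard, Finset.mem_powersetCard]
      refine ⟨⟨Finset.inter_subset_right, hab⟩,
        Finset.sdiff_subset_sdiff haU le_rfl, ?_⟩
      have h1 : a ∩ (C ∪ b) = C ∪ (a ∩ b) := by
        rw [Finset.inter_union_distrib_left, Finset.inter_eq_right.mpr hCa]
      have h2 : (a ∩ (C ∪ b)).card = 2 * t + 1 := by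
        rw [h1, Finset.card_union_of_disjoint
          (Finset.disjoint_of_subset_right Finset.inter_subset_right hCbdisj),
          hCcard, hab]
        omega
      have h3 := Finset.card_inter_add_card_sdiff a (C ∪ b)
      show (a \ (C ∪ b)).card = k - 2 * t - 1
      omega
    · intro p hp
      rw [Finset.mem_coe, Finset.mem_product, Finset.mem_powersetCard, Finset.mem_powersetCard] at hp
      obtain ⟨⟨hTb, hTc⟩, hSW, hSc⟩ := hp
      have hSC : Disjoint p.2 C := Finset.disjoint_of_subset_left hSW
        (Finset.disjoint_of_subset_right (Finset.subset_union_left) Finset.sdiff_disjoint)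
      have hSb : Disjoint p.2 b := Finset.disjoint_of_subset_left hSW
        (Finset.disjoint_of_subset_right (Finset.subset_union_right) Finset.sdiff_disjoint)
      have hCT : Disjoint C p.1 := Finset.disjoint_of_subset_right hTb hCbdisj
      rw [Finset.mem_coe, Finset.mem_filter, mem_famA1]
      refine ⟨⟨Finset.union_subset (Finset.union_subset hCU (hTb.trans hbU))
        (hSW.trans Finset.sdiff_subset), ?_, (Finset.subset_union_left).trans
        Finset.subset_union_left⟩, ?_⟩
      · rw [Finset.card_union_of_disjoint (by
          exact Finset.disjoint_union_left.mpr ⟨hSC.symm, (Finset.disjoint_of_subset_right hTb hSb).symm⟩),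
          Finset.card_union_of_disjoint hCT, hCcard, hTc, hSc]
        omega
      · have : (C ∪ p.1 ∪ p.2) ∩ b = p.1 := by
          ext x
          simp only [Finset.mem_inter, Finset.mem_union]
          have e1 : x ∈ C → x ∉ b := fun h => Finset.disjoint_left.mp hCbdisj h
          have e2 : x ∈ p.2 → x ∉ b := fun h => Finset.disjoint_left.mp hSb h
          have e3 : x ∈ p.1 → x ∈ b := fun h => hTb h
          tauto
        rw [this, hTc]
    · intro a ha
      rw [Finset.mem_coe, Finset.mem_filter, mem_famA1] at ha
      obtain ⟨⟨haU, hak, hCa⟩, hab⟩ := ha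
      ext x
      simp only [Finset.mem_union, Finset.mem_inter, Finset.mem_sdiff]
      have e1 : x ∈ C → x ∈ a := fun h => hCa h
      by_cases hxb : x ∈ b <;> by_cases hxC : x ∈ C <;> tauto
    · intro p hp
      rw [Finset.mem_coe, Finset.mem_product, Finset.mem_powersetCard, Finset.mem_powersetCard] at hp
      obtain ⟨⟨hTb, hTc⟩, hSW, hSc⟩ := hp
      have e1 : ∀ x, x ∈ C → x ∉ b := fun x h => Finset.disjoint_left.mp hCbdisj h
      have e2 : ∀ x, x ∈ p.2 → x ∉ b ∧ x ∉ C := by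
        intro x h
        have := hSW h
        rw [Finset.mem_sdiff, Finset.mem_union] at this
        tauto
      have e3 : ∀ x, x ∈ p.1 → x ∈ b := fun x h => hTb h
      have h1 : (C ∪ p.1 ∪ p.2) ∩ b = p.1 := by
        ext x
        simp only [Finset.mem_inter, Finset.mem_union]
        have := e1 x; have := e2 x; have := e3 x
        tauto
      have h2 : (C ∪ p.1 ∪ p.2) \ (C ∪ b) = p.2 := by
        ext x
        simp only [Finset.mem_sdiff, Finset.mem_union]
        have := e1 x; have := e2 x; have := e3 x
        tauto
      exact Prod.ext h1 h2
  rw [key, Finset.card_product, Finset.card_powersetCard, Finset.card_powersetCard,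
    hbk, hWcard]

lemma inter_card_ne_of_core {t : ℕ} {a b C : Finset ℕ} (hCa : C ⊆ a) (hCb : C ⊆ b)
    (hC : t < C.card) : (a ∩ b).card ≠ t := by
  intro h
  have := Finset.card_le_card (Finset.subset_inter hCa hCb)
  omega

lemma rhoPairs_union (n k t : ℕ) (hk : 2 * t + 1 ≤ k)
    {B : Finset (Finset ℕ)} (hB : B ⊆ famA2 n k t) :
    rhoPairs t (famA1 n k t ∪ B)
      = ((B ×ˢ famA1 n k t).filter (fun p => (p.2 ∩ p.1).card = t)).card := by
  have hdisj : Disjoint (famA1 n k t) B :=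
    Finset.disjoint_of_subset_right hB (famA1_disj_famA2 n k t)
  have hC1 : (Finset.Icc 1 (t + 1)).card = t + 1 := by rw [Nat.card_Icc]; omega
  have hC2 : (Finset.Icc (t + 2) (2 * t + 2)).card = t + 1 := by rw [Nat.card_Icc]; omega
  symm
  unfold rhoPairs
  apply Finset.card_nbij (fun p => {p.2, p.1})
  · intro p hp
    rw [Finset.mem_coe, Finset.mem_filter, Finset.mem_product] at hp
    obtain ⟨⟨hpB, hpA⟩, hpt⟩ := hp
    have hak : p.2.card = k := (mem_famA1.mp hpA).2.1
    have hne : p.2 ≠ p.1 := by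
      intro h
      rw [h, Finset.inter_self] at hpt
      have : p.1.card = k := (mem_famA2.mp (hB hpB)).2.1
      omega
    rw [Finset.mem_coe, Finset.mem_filter, Finset.mem_powersetCard]
    refine ⟨⟨?_, Finset.card_pair hne⟩, p.2, Finset.mem_insert_self _ _,
      p.1, Finset.mem_insert_of_mem (Finset.mem_singleton_self _), hne, hpt⟩
    rw [Finset.insert_subset_iff, Finset.singleton_subset_iff]
    exact ⟨Finset.mem_union_left _ hpA, Finset.mem_union_right _ hpB⟩
  · intro p hp q hq heq
    rw [Finset.mem_coe, Finset.mem_filter, Finset.mem_product] at hp hq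
    have hmem : ∀ x ∈ famA1 n k t, x ∉ B := fun x hx => Finset.disjoint_left.mp hdisj hx
    have heq' : ({p.2, p.1} : Finset (Finset ℕ)) = {q.2, q.1} := heq
    have h2 : p.2 = q.2 := by
      have h : p.2 ∈ ({q.2, q.1} : Finset (Finset ℕ)) :=
        heq' ▸ Finset.mem_insert_self p.2 {p.1}
      rcases Finset.mem_insert.mp h with h | h
      · exact h
      · rw [Finset.mem_singleton] at h
        exact absurd hq.1.1 (h ▸ hmem _ hp.1.2)
    have h1 : p.1 = q.1 := by
      have h : p.1 ∈ ({q.2, q.1} : Finset (Finset ℕ)) :=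
        heq' ▸ Finset.mem_insert_of_mem (Finset.mem_singleton_self p.1)
      rcases Finset.mem_insert.mp h with h | h
      · exact absurd (h ▸ hp.1.1) (hmem _ hq.1.2)
      · exact Finset.mem_singleton.mp h
    exact Prod.ext h1 h2
  · intro P hP
    rw [Finset.mem_coe, Finset.mem_filter, Finset.mem_powersetCard] at hP
    obtain ⟨⟨hPsub, hP2⟩, A, hA, B', hB', hne, hcard⟩ := hP
    have hPeq : P = {A, B'} := by
      refine (Finset.eq_of_subset_of_card_le ?_ ?_).symm
      · rw [Finset.insert_subset_iff, Finset.singleton_subset_iff]; exact ⟨hA, hB'⟩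
      · rw [hP2, Finset.card_pair hne]
    have hAm := Finset.mem_union.mp (hPsub hA)
    have hBm := Finset.mem_union.mp (hPsub hB')
    rcases hAm with hA1 | hA2 <;> rcases hBm with hB1 | hB2
    · exact absurd hcard (inter_card_ne_of_core (mem_famA1.mp hA1).2.2
        (mem_famA1.mp hB1).2.2 (by omega))
    · refine ⟨(B', A), ?_, hPeq.symm⟩
      rw [Finset.mem_coe, Finset.mem_filter, Finset.mem_product]
      exact ⟨⟨hB2, hA1⟩, hcard⟩
    · refine ⟨(A, B'), ?_, ?_⟩
      · rw [Finset.mem_coe, Finset.mem_filter, Finset.mem_product]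
        exact ⟨⟨hA2, hB1⟩, by rw [Finset.inter_comm]; exact hcard⟩
      · rw [hPeq]; exact Finset.pair_comm B' A
    · exact absurd hcard (inter_card_ne_of_core (mem_famA2.mp (hB hA2)).2.2.1
        (mem_famA2.mp (hB hB2)).2.2.1 (by omega))

/-- First extremal construction: adding `r` sets of the star `A₂` to the full star `A₁`
produces exactly `r ⋅ C(k,t) ⋅ C(n-k-t-1, k-2t-1)` pairs with intersection `t`. -/
theorem construction_two_stars (n k t r : ℕ) (ht : 1 ≤ t) (hk : 2 * t + 1 ≤ k)
    (hn : 2 * k + 2 ≤ n) (hr1 : 1 ≤ r) (hr2 : r ≤ (n - 2 * t - 2).choose (k - t - 1)) :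
    (∀ B ⊆ famA2 n k t, B.card = r →
      (famA1 n k t ∪ B).card = (n - t - 1).choose (k - t - 1) + r ∧
      rhoPairs t (famA1 n k t ∪ B)
        = r * k.choose t * (n - k - t - 1).choose (k - 2 * t - 1)) ∧
    rhoMin n k t ((n - t - 1).choose (k - t - 1) + r)
      ≤ r * k.choose t * (n - k - t - 1).choose (k - 2 * t - 1) := by
  have hmain : ∀ B ⊆ famA2 n k t, B.card = r →
      (famA1 n k t ∪ B).card = (n - t - 1).choose (k - t - 1) + r ∧
      rhoPairs t (famA1 n k t ∪ B)
        = r * k.choose t * (n - k - t - 1).choose (k - 2 * t - 1) := by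
    intro B hB hBcard
    have hdisj : Disjoint (famA1 n k t) B :=
      Finset.disjoint_of_subset_right hB (famA1_disj_famA2 n k t)
    constructor
    · rw [Finset.card_union_of_disjoint hdisj, card_famA1 n k t (by omega) (by omega),
        hBcard]
    · rw [rhoPairs_union n k t hk hB, Finset.card_filter, Finset.sum_product]
      have hinner : ∀ x ∈ B,
          (∑ y ∈ famA1 n k t, if (y ∩ x).card = t then 1 else 0)
            = k.choose t * (n - k - t - 1).choose (k - 2 * t - 1) := by
        intro x hx
        rw [← Finset.card_filter]
        exact count_cross n k t hk hn (hB hx)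
      rw [Finset.sum_congr rfl hinner, Finset.sum_const, hBcard, smul_eq_mul, mul_assoc]
  refine ⟨hmain, ?_⟩
  obtain ⟨B, hBsub, hBcard⟩ := Finset.exists_subset_card_eq (s := famA2 n k t) (n := r)
    (by rw [card_famA2 n k t (by omega) (by omega)]; exact hr2)
  obtain ⟨h1, h2⟩ := hmain B hBsub hBcard
  apply Nat.sInf_le
  exact ⟨famA1 n k t ∪ B,
    Finset.union_subset (Finset.filter_subset _ _)
      (hBsub.trans (Finset.filter_subset _ _)), h1, h2⟩
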